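/- Let H be a real Hilbert space, r, s ∈ O(H), and v a unit vector with r(v) = v. Fix ε₁ > 0 and suppose ⟨s(v), v⟩ ≥ ε₁. Then for any positive integer l₁ with l₁ ≥ 2/ε₁² + 1, there exists l̃ ∈ {1, ..., l₁} such that ⟨s(v), r^{l̃}(s(v))⟩ ≥ ε₁²/2. -/

import Mathlib

/-- Let `r, s` be orthogonal transformations of a real Hilbert space,
`v` a unit vector with `r v = v`, `ε₁ > 0` with `⟨s v, v⟩ ≥ ε₁`. Then for any
positive integer `l₁ ≥ 2/ε₁² + 1` there is `l̃ ∈ {1, ..., l₁}` with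
`⟨s v, r^{l̃}(s v)⟩ ≥ ε₁²/2`. -/
theorem stmt2 {H : Type*} [NormedAddCommGroup H] [InnerProductSpace ℝ H]
    [CompleteSpace H] (r s : H ≃ₗᵢ[ℝ] H) (v : H) (hv : ‖v‖ = 1) (hrv : r v = v)
    (ε₁ : ℝ) (hε : 0 < ε₁) (hsv : (inner ℝ (s v) v : ℝ) ≥ ε₁)
    (l₁ : ℕ) (hl₁pos : 0 < l₁) (hl₁ : (l₁ : ℝ) ≥ 2 / ε₁ ^ 2 + 1) :
    ∃ l ∈ Finset.Icc 1 l₁, (inner ℝ (s v) ((⇑r)^[l] (s v)) : ℝ) ≥ ε₁ ^ 2 / 2 := by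
  by_contra hcon
  push_neg at hcon
  set α : ℝ := inner ℝ (s v) v with hα
  have hαle : α ≤ 1 := by
    calc α ≤ ‖s v‖ * ‖v‖ := real_inner_le_norm _ _
    _ = 1 := by rw [s.norm_map, hv]; ring
  set w : ℕ → H := fun l => (⇑r)^[l] (s v) with hw
  have hiter : ∀ (l : ℕ) (x y : H), (inner ℝ ((⇑r)^[l] x) ((⇑r)^[l] y) : ℝ) = inner ℝ x y := by
    intro l
    induction l with
    | zero => intro x y; simp
    | succ n ih =>
      intro x y
      rw [Function.iterate_succ_apply', Function.iterate_succ_apply',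
        r.inner_map_map]
      exact ih x y
  have hrvl : ∀ l : ℕ, (⇑r)^[l] v = v := by
    intro l
    induction l with
    | zero => rfl
    | succ n ih => rw [Function.iterate_succ_apply', ih, hrv]
  have hwv : ∀ l : ℕ, (inner ℝ (w l) v : ℝ) = α := by
    intro l
    have := hiter l (s v) v
    rwa [hrvl l] at this
  have hww : ∀ l : ℕ, (inner ℝ (w l) (w l) : ℝ) = 1 := by
    intro l
    show (inner ℝ ((⇑r)^[l] (s v)) ((⇑r)^[l] (s v)) : ℝ) = 1
    rw [hiter l, real_inner_self_eq_norm_sq, s.norm_map, hv]; norm_num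
  have hshift : ∀ i k : ℕ, (inner ℝ (w i) (w (i + k)) : ℝ) = inner ℝ (w 0) (w k) := by
    intro i k
    have h1 : w (i + k) = (⇑r)^[i] (w k) := by
      show (⇑r)^[i + k] (s v) = _
      rw [Function.iterate_add_apply]
    have h0 : w i = (⇑r)^[i] (w 0) := rfl
    rw [h1, h0, hiter]
  have haux : ∀ i j : ℕ, i < j → j ≤ l₁ → (inner ℝ (w i) (w j) : ℝ) < ε₁ ^ 2 / 2 := by
    intro i j hij hjl
    have : j = i + (j - i) := by omega
    rw [this, hshift]
    have := hcon (j - i) (Finset.mem_Icc.mpr ⟨by omega, by omega⟩)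
    exact this
  set q : ℕ → H := fun l => w l - α • v with hq
  have hqq : ∀ i j : ℕ, (inner ℝ (q i) (q j) : ℝ) = inner ℝ (w i) (w j) - α ^ 2 := by
    intro i j
    show (inner ℝ (w i - α • v) (w j - α • v) : ℝ) = _
    simp only [inner_sub_left, inner_sub_right, real_inner_smul_left,
      real_inner_smul_right, hwv]
    have h1 : (inner ℝ v (w j) : ℝ) = α := by rw [real_inner_comm]; exact hwv j
    have h2 : (inner ℝ v v : ℝ) = 1 := by
      rw [real_inner_self_eq_norm_sq, hv]; norm_num
    rw [h1, h2]
    ring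
  set N : ℕ := l₁ + 1 with hN
  have hpos : (0:ℝ) ≤ inner ℝ (∑ i ∈ Finset.range N, q i) (∑ i ∈ Finset.range N, q i) :=
    real_inner_self_nonneg
  have hexp : (inner ℝ (∑ i ∈ Finset.range N, q i) (∑ i ∈ Finset.range N, q i) : ℝ)
      = ∑ i ∈ Finset.range N, ∑ j ∈ Finset.range N, (inner ℝ (q i) (q j) : ℝ) := by
    rw [sum_inner]
    exact Finset.sum_congr rfl fun i _ => inner_sum _ _ _
  have hbound : ∑ i ∈ Finset.range N, ∑ j ∈ Finset.range N, (inner ℝ (q i) (q j) : ℝ)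
      ≤ ∑ i ∈ Finset.range N, ∑ j ∈ Finset.range N,
        (if i = j then 1 - α ^ 2 else ε₁ ^ 2 / 2 - α ^ 2) := by
    apply Finset.sum_le_sum
    intro i hi
    apply Finset.sum_le_sum
    intro j hj
    rw [hqq]
    by_cases hij : i = j
    · rw [if_pos hij, hij, hww]
    · simp only [if_neg hij]
      have hi' : i ≤ l₁ := by
        have := Finset.mem_range.mp hi; omega
      have hj' : j ≤ l₁ := by
        have := Finset.mem_range.mp hj; omega
      rcases Nat.lt_or_ge i j with h | h
      · have := haux i j h hj'
        linarith
      · have hji : j < i := by omega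
        have := haux j i hji hi'
        rw [real_inner_comm]
        linarith
  have hifsum : ∀ i ∈ Finset.range N,
      ∑ j ∈ Finset.range N, (if i = j then 1 - α ^ 2 else ε₁ ^ 2 / 2 - α ^ 2)
      = (N : ℝ) * (ε₁ ^ 2 / 2 - α ^ 2) + ((1 - α ^ 2) - (ε₁ ^ 2 / 2 - α ^ 2)) := by
    intro i hi
    have : ∀ j : ℕ, (if i = j then 1 - α ^ 2 else ε₁ ^ 2 / 2 - α ^ 2)
        = (ε₁ ^ 2 / 2 - α ^ 2) + (if j = i then ((1 - α ^ 2) - (ε₁ ^ 2 / 2 - α ^ 2)) else 0) := by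
      intro j
      by_cases h : i = j
      · simp [h]
      · have h' : ¬ (j = i) := fun hh => h hh.symm
        simp [h, h']
    simp only [this]
    rw [Finset.sum_add_distrib, Finset.sum_const,
      Finset.sum_ite_eq' (Finset.range N) i, if_pos hi, Finset.card_range, nsmul_eq_mul]
  have htotal : ∑ i ∈ Finset.range N, ∑ j ∈ Finset.range N,
      (if i = j then 1 - α ^ 2 else ε₁ ^ 2 / 2 - α ^ 2)
      = (N : ℝ) * ((N : ℝ) * (ε₁ ^ 2 / 2 - α ^ 2) + ((1 - α ^ 2) - (ε₁ ^ 2 / 2 - α ^ 2))) := by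
    rw [Finset.sum_congr rfl hifsum, Finset.sum_const, Finset.card_range, nsmul_eq_mul]
  have key : (0:ℝ) ≤ (N : ℝ) * ((N : ℝ) * (ε₁ ^ 2 / 2 - α ^ 2) + ((1 - α ^ 2) - (ε₁ ^ 2 / 2 - α ^ 2))) := by
    rw [← htotal]
    calc (0:ℝ) ≤ _ := hpos
    _ = _ := hexp
    _ ≤ _ := hbound
  -- Now derive the contradiction arithmetically.
  have hεα : ε₁ ≤ α := hsv
  have hε2 : ε₁ ^ 2 ≤ α ^ 2 := by nlinarith
  have hNcast : (N : ℝ) = (l₁ : ℝ) + 1 := by push_cast [hN]; ring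
  have hldiv : (l₁ : ℝ) * ε₁ ^ 2 ≥ 2 + ε₁ ^ 2 := by
    have hε2pos : (0:ℝ) < ε₁ ^ 2 := by positivity
    have := mul_le_mul_of_nonneg_right hl₁ (le_of_lt hε2pos)
    rw [add_mul, div_mul_cancel₀ _ (ne_of_gt hε2pos), one_mul] at this
    linarith [mul_le_mul_of_nonneg_right hl₁ hε2pos.le]
  have hl1pos' : (1:ℝ) ≤ (l₁ : ℝ) := by exact_mod_cast hl₁pos
  rw [hNcast] at key
  have hεpos2 : (0:ℝ) < ε₁ ^ 2 := by positivity
  have hmul : (l₁ : ℝ) * ε₁ ^ 2 ≤ (l₁ : ℝ) * α ^ 2 :=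
    mul_le_mul_of_nonneg_left hε2 (by linarith)
  have hinner : ((l₁ : ℝ) + 1) * (ε₁ ^ 2 / 2 - α ^ 2)
      + (1 - α ^ 2 - (ε₁ ^ 2 / 2 - α ^ 2)) < 0 := by nlinarith
  have := mul_neg_of_pos_of_neg (show (0:ℝ) < (l₁ : ℝ) + 1 by linarith) hinner
  linarith
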